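/- Let n ≥ 2, let H be an invertible n×n real Hankel matrix, and let u = (u₁,…,u_{n+1}) ∈ ℝ^{n+1} with u₁ ≠ 0 and u_{n+1} ≠ 0. If the reversed vector u^J lies in the kernel of ∂H, then for every integer k, H⁻¹·C_t(u)^k·H = C_l(u^J)^k (equivalently, H⁻¹·C_b(u)^k·H = C_r(u^J)^k). -/
import Mathlib


open Matrix Polynomial

noncomputable section

/-- Top companion matrix of `u`. -/
def Ct (n : ℕ) (u : Fin (n + 1) → ℝ) : Matrix (Fin n) (Fin n) ℝ :=
  Matrix.of fun i j =>
    if i.val = 0 then -u ⟨n - 1 - j.val, by omega⟩ / u (Fin.last n)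
    else if j.val + 1 = i.val then 1 else 0

/-- Bottom companion matrix of `u`. -/
def Cb (n : ℕ) (u : Fin (n + 1) → ℝ) : Matrix (Fin n) (Fin n) ℝ :=
  Matrix.of fun i j =>
    if i.val = n - 1 then -u ⟨n - j.val, by omega⟩ / u 0
    else if j.val = i.val + 1 then 1 else 0

/-- Left companion matrix of `u`. -/
def Cl (n : ℕ) (u : Fin (n + 1) → ℝ) : Matrix (Fin n) (Fin n) ℝ :=
  Matrix.of fun i j =>
    if j.val = 0 then -u ⟨i.val + 1, by have := i.isLt; omega⟩ / u 0
    else if i.val + 1 = j.val then 1 else 0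

/-- Right companion matrix of `u`. -/
def Cr (n : ℕ) (u : Fin (n + 1) → ℝ) : Matrix (Fin n) (Fin n) ℝ :=
  Matrix.of fun i j =>
    if j.val = n - 1 then -u ⟨i.val, by have := i.isLt; omega⟩ / u (Fin.last n)
    else if i.val = j.val + 1 then 1 else 0

/-- A square matrix is Toeplitz if entries depend only on the difference of indices. -/
def IsToeplitz {n : ℕ} (T : Matrix (Fin n) (Fin n) ℝ) : Prop :=
  ∀ (i j : Fin n) (hi : i.val + 1 < n) (hj : j.val + 1 < n),
    T ⟨i.val + 1, hi⟩ ⟨j.val + 1, hj⟩ = T i j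

/-- A square matrix is Hankel if entries depend only on the sum of indices. -/
def IsHankel {n : ℕ} (H : Matrix (Fin n) (Fin n) ℝ) : Prop :=
  ∀ (i j : Fin n) (hi : i.val + 1 < n) (hj : j.val + 1 < n),
    H ⟨i.val + 1, hi⟩ j = H i ⟨j.val + 1, hj⟩

/-- `∂T` for a Toeplitz matrix `T`: the (n-1)×(n+1) matrix with entries `a_{i+1-j}`
(1-based), expressed via the entries of `T`. -/
def dT {n : ℕ} (T : Matrix (Fin n) (Fin n) ℝ) : Matrix (Fin (n - 1)) (Fin (n + 1)) ℝ :=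
  Matrix.of fun i j =>
    if j.val = 0 then
      T ⟨i.val + 1, by have := i.isLt; omega⟩ ⟨0, by have := i.isLt; omega⟩
    else
      T ⟨i.val, by have := i.isLt; omega⟩ ⟨j.val - 1, by have := i.isLt; have := j.isLt; omega⟩

/-- `∂H` for a Hankel matrix `H`: the (n-1)×(n+1) matrix with entries `a_{i+j-n-1}`
(1-based), expressed via the entries of `H`. -/
def dH {n : ℕ} (H : Matrix (Fin n) (Fin n) ℝ) : Matrix (Fin (n - 1)) (Fin (n + 1)) ℝ :=
  Matrix.of fun i j =>
    if h : j.val < n then H ⟨i.val, by have := i.isLt; omega⟩ ⟨j.val, h⟩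
    else H ⟨i.val + 1, by have := i.isLt; omega⟩ ⟨n - 1, by have := i.isLt; omega⟩

/-- The reversed vector `u^J`. -/
def revVec {m : ℕ} (u : Fin m → ℝ) : Fin m → ℝ := fun i => u i.rev

/-- The lower triangular Toeplitz matrix `U₊(u)` with first column `(u₁,…,u_n)ᵀ`. -/
def Uplus (n : ℕ) (u : Fin (n + 1) → ℝ) : Matrix (Fin n) (Fin n) ℝ :=
  Matrix.of fun i j =>
    if j.val ≤ i.val then u ⟨i.val - j.val, by have := i.isLt; omega⟩ else 0

/-- The upper triangular Toeplitz matrix `U₋(u)` with first row `(u_{n+1},…,u₂)`. -/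
def Uminus (n : ℕ) (u : Fin (n + 1) → ℝ) : Matrix (Fin n) (Fin n) ℝ :=
  Matrix.of fun i j =>
    if h : i.val ≤ j.val then u ⟨n + i.val - j.val, by have := j.isLt; omega⟩ else 0

/-- The flip (exchange) matrix `J`. -/
def Jmat (n : ℕ) : Matrix (Fin n) (Fin n) ℝ :=
  Matrix.of fun i j => if j = i.rev then 1 else 0

/-- The Toeplitz Bezoutian `B_T(u,v) = U₊(u)U₋(v) − U₊(v)U₋(u)`. -/
def BT (n : ℕ) (u v : Fin (n + 1) → ℝ) : Matrix (Fin n) (Fin n) ℝ :=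
  Uplus n u * Uminus n v - Uplus n v * Uminus n u

/-- The Hankel Bezoutian `B_H(u,v) = U₊(v)JU₋(u) − U₊(u)JU₋(v)`. -/
def BH (n : ℕ) (u v : Fin (n + 1) → ℝ) : Matrix (Fin n) (Fin n) ℝ :=
  Uplus n v * Jmat n * Uminus n u - Uplus n u * Jmat n * Uminus n v

/-- The polynomial `u(λ) = u₁ + u₂λ + ⋯ + u_{n+1}λⁿ` associated to a vector. -/
def polyOf {m : ℕ} (u : Fin m → ℝ) : Polynomial ℝ :=
  ∑ i : Fin m, Polynomial.C (u i) * Polynomial.X ^ (i : ℕ)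


section Aux

lemma hankel_shift {n : ℕ} {H : Matrix (Fin n) (Fin n) ℝ} (hH : IsHankel H) :
    ∀ (d : ℕ) (i j : Fin n) (h1 : i.val + d < n) (h2 : d ≤ j.val),
      H ⟨i.val + d, h1⟩ ⟨j.val - d, by omega⟩ = H i j := by
  intro d
  induction d with
  | zero => intro i j h1 h2; simp
  | succ d ih =>
    intro i j h1 h2
    have key := hH ⟨i.val + d, by omega⟩ ⟨j.val - (d+1), by omega⟩ (by simp; omega)
      (by simp; have := j.isLt; omega)
    have e1 : (⟨j.val - (d+1) + 1, by have := j.isLt; omega⟩ : Fin n) = ⟨j.val - d, by have := j.isLt; omega⟩ := by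
      rw [Fin.mk.injEq]; omega
    rw [e1] at key
    have := ih i j (by omega) (by omega)
    calc H ⟨i.val + (d+1), h1⟩ ⟨j.val - (d+1), by have := j.isLt; omega⟩
        = H ⟨i.val + d, by omega⟩ ⟨j.val - d, by have := j.isLt; omega⟩ := key
      _ = H i j := this

lemma hankel_eq {n : ℕ} {H : Matrix (Fin n) (Fin n) ℝ} (hH : IsHankel H)
    (i j i' j' : Fin n) (h : i.val + j.val = i'.val + j'.val) : H i j = H i' j' := by
  rcases le_total i.val i'.val with hle | hle
  · have := hankel_shift hH (i'.val - i.val) i j (by omega) (by omega)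
    rw [← this]; congr 1 <;> apply Fin.ext <;> simp <;> omega
  · have := hankel_shift hH (i.val - i'.val) i' j' (by omega) (by omega)
    rw [← this]; congr 1 <;> apply Fin.ext <;> simp <;> omega

lemma ker1 {n : ℕ} (hn : 2 ≤ n) {H : Matrix (Fin n) (Fin n) ℝ} (hH : IsHankel H)
    {u : Fin (n + 1) → ℝ} (hker : (dH H).mulVec (revVec u) = 0)
    (j : ℕ) (hj1 : 1 ≤ j) (hj2 : j < n) :
    ∑ l : Fin n, u ⟨n - 1 - l.val, by omega⟩ * H l ⟨j, hj2⟩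
      = -(u (Fin.last n)) * H ⟨j - 1, by omega⟩ ⟨0, by omega⟩ := by
  have h0 := congrFun hker ⟨j - 1, by omega⟩
  simp only [Matrix.mulVec, dotProduct, Pi.zero_apply] at h0
  rw [Fin.sum_univ_succ] at h0
  have hfirst : dH H ⟨j - 1, by omega⟩ 0 * revVec u 0
      = H ⟨j - 1, by omega⟩ ⟨0, by omega⟩ * u (Fin.last n) := by
    simp only [dH, revVec, Matrix.of_apply]
    rw [dif_pos (show ((0 : Fin (n+1)) : ℕ) < n by simp; omega)]
    congr 1
  have hrest : ∀ l : Fin n, dH H ⟨j - 1, by omega⟩ l.succ * revVec u l.succ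
      = u ⟨n - 1 - l.val, by omega⟩ * H l ⟨j, hj2⟩ := by
    intro l
    have hv : revVec u l.succ = u ⟨n - 1 - l.val, by omega⟩ := by
      simp only [revVec]; congr 1; ext; simp [Fin.val_rev]; try omega
    rw [hv, mul_comm]
    congr 1
    simp only [dH, Matrix.of_apply, Fin.val_succ]
    split
    · exact hankel_eq hH _ _ _ _ (by simp; omega)
    · next h => exact hankel_eq hH _ _ _ _ (by simp; omega)
  rw [hfirst] at h0
  calc ∑ l : Fin n, u ⟨n - 1 - l.val, by omega⟩ * H l ⟨j, hj2⟩
      = ∑ l : Fin n, dH H ⟨j - 1, by omega⟩ l.succ * revVec u l.succ :=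
        (Finset.sum_congr rfl fun l _ => (hrest l).symm)
    _ = -(u (Fin.last n)) * H ⟨j - 1, by omega⟩ ⟨0, by omega⟩ := by
        have := h0; ring_nf at this ⊢; linarith

lemma ker2 {n : ℕ} (hn : 2 ≤ n) {H : Matrix (Fin n) (Fin n) ℝ} (hH : IsHankel H)
    {u : Fin (n + 1) → ℝ} (hker : (dH H).mulVec (revVec u) = 0)
    (j : ℕ) (hj : j + 1 < n) :
    ∑ l : Fin n, u ⟨n - l.val, by omega⟩ * H l ⟨j, by omega⟩
      = -(u 0) * H ⟨j + 1, hj⟩ ⟨n - 1, by omega⟩ := by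
  have h0 := congrFun hker ⟨j, by omega⟩
  simp only [Matrix.mulVec, dotProduct, Pi.zero_apply] at h0
  rw [Fin.sum_univ_castSucc] at h0
  have hlast : dH H ⟨j, by omega⟩ (Fin.last n) * revVec u (Fin.last n)
      = H ⟨j + 1, hj⟩ ⟨n - 1, by omega⟩ * u 0 := by
    simp [dH, revVec, Fin.rev]
  have hrest : ∀ l : Fin n, dH H ⟨j, by omega⟩ l.castSucc * revVec u l.castSucc
      = u ⟨n - l.val, by omega⟩ * H l ⟨j, by omega⟩ := by
    intro l
    have hv : revVec u l.castSucc = u ⟨n - l.val, by omega⟩ := by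
      simp only [revVec]; congr 1; ext; simp [Fin.val_rev]; try omega
    rw [hv, mul_comm]
    congr 1
    simp only [dH, Matrix.of_apply, Fin.coe_castSucc, l.isLt, dif_pos]
    exact hankel_eq hH _ _ _ _ (by simp; omega)
  rw [hlast] at h0
  calc ∑ l : Fin n, u ⟨n - l.val, by omega⟩ * H l ⟨j, by omega⟩
      = ∑ l : Fin n, dH H ⟨j, by omega⟩ l.castSucc * revVec u l.castSucc :=
        (Finset.sum_congr rfl fun l _ => (hrest l).symm)
    _ = -(u 0) * H ⟨j + 1, hj⟩ ⟨n - 1, by omega⟩ := by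
        have := h0; ring_nf at this ⊢; linarith

lemma revVec_mk {n : ℕ} (u : Fin (n + 1) → ℝ) (k : ℕ) (h : k < n + 1) :
    revVec u ⟨k, h⟩ = u ⟨n - k, by omega⟩ := by
  simp only [revVec]; congr 1; ext; simp [Fin.val_rev]; try omega

lemma revVec_zero {n : ℕ} (u : Fin (n + 1) → ℝ) : revVec u 0 = u (Fin.last n) := by
  simp [revVec]

lemma revVec_last {n : ℕ} (u : Fin (n + 1) → ℝ) : revVec u (Fin.last n) = u 0 := by
  simp [revVec]

lemma prod1 {n : ℕ} (hn : 2 ≤ n) {H : Matrix (Fin n) (Fin n) ℝ} (hH : IsHankel H)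
    {u : Fin (n + 1) → ℝ} (hun : u (Fin.last n) ≠ 0)
    (hker : (dH H).mulVec (revVec u) = 0) :
    Ct n u * H = H * Cl n (revVec u) := by
  ext i j
  rw [Matrix.mul_apply, Matrix.mul_apply]
  by_cases hi0 : i.val = 0
  · by_cases hj0 : j.val = 0
    · apply Finset.sum_congr rfl
      intro l _
      have e1 : Ct n u i l = -u ⟨n - 1 - l.val, by omega⟩ / u (Fin.last n) := by
        simp only [Ct, Matrix.of_apply]
        rw [if_pos hi0]
      have e2 : Cl n (revVec u) l j = -u ⟨n - 1 - l.val, by omega⟩ / u (Fin.last n) := by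
        simp only [Cl, Matrix.of_apply]
        rw [if_pos hj0, revVec_zero, revVec_mk]
        rw [show (⟨n - (l.val + 1), by omega⟩ : Fin (n + 1))
            = ⟨n - 1 - l.val, by omega⟩ from Fin.ext (show n - (l.val + 1) = n - 1 - l.val by omega)]
      rw [e1, e2, hankel_eq hH l j i l (show l.val + j.val = i.val + l.val by omega)]
      ring
    · have hL : ∑ l, Ct n u i l * H l j
          = -(1 / u (Fin.last n)) * ∑ l : Fin n, u ⟨n - 1 - l.val, by omega⟩ * H l ⟨j.val, j.isLt⟩ := by
        rw [Finset.mul_sum]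
        apply Finset.sum_congr rfl
        intro l _
        have e1 : Ct n u i l = -u ⟨n - 1 - l.val, by omega⟩ / u (Fin.last n) := by
          simp only [Ct, Matrix.of_apply]
          rw [if_pos hi0]
        rw [e1, show (⟨j.val, j.isLt⟩ : Fin n) = j from Fin.ext rfl]
        ring
      rw [hL, ker1 hn hH hker j.val (by omega) j.isLt]
      have hR : ∑ l, H i l * Cl n (revVec u) l j = H i ⟨j.val - 1, by omega⟩ := by
        rw [Finset.sum_eq_single (⟨j.val - 1, by omega⟩ : Fin n)]
        · have : Cl n (revVec u) ⟨j.val - 1, by omega⟩ j = 1 := by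
            simp only [Cl, Matrix.of_apply]
            rw [if_neg hj0, if_pos (show j.val - 1 + 1 = j.val by omega)]
          rw [this, mul_one]
        · intro b _ hb
          have : Cl n (revVec u) b j = 0 := by
            simp only [Cl, Matrix.of_apply]
            rw [if_neg hj0, if_neg (fun hc => hb (Fin.ext (show b.val = j.val - 1 by omega)))]
          rw [this, mul_zero]
        · intro h; exact absurd (Finset.mem_univ _) h
      rw [hR]
      rw [hankel_eq hH ⟨j.val - 1, by omega⟩ ⟨0, by omega⟩ i ⟨j.val - 1, by omega⟩
        (show j.val - 1 + 0 = i.val + (j.val - 1) by omega)]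
      field_simp
  · have hL : ∑ l, Ct n u i l * H l j = H ⟨i.val - 1, by omega⟩ j := by
      rw [Finset.sum_eq_single (⟨i.val - 1, by omega⟩ : Fin n)]
      · have : Ct n u i ⟨i.val - 1, by omega⟩ = 1 := by
          simp only [Ct, Matrix.of_apply]
          rw [if_neg hi0, if_pos (show i.val - 1 + 1 = i.val by omega)]
        rw [this, one_mul]
      · intro b _ hb
        have : Ct n u i b = 0 := by
          simp only [Ct, Matrix.of_apply]
          rw [if_neg hi0, if_neg (fun hc => hb (Fin.ext (show b.val = i.val - 1 by omega)))]
        rw [this, zero_mul]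
      · intro h; exact absurd (Finset.mem_univ _) h
    rw [hL]
    by_cases hj0 : j.val = 0
    · have hR : ∑ l, H i l * Cl n (revVec u) l j
          = -(1 / u (Fin.last n)) * ∑ l : Fin n, u ⟨n - 1 - l.val, by omega⟩ * H l ⟨i.val, i.isLt⟩ := by
        rw [Finset.mul_sum]
        apply Finset.sum_congr rfl
        intro l _
        have e2 : Cl n (revVec u) l j = -u ⟨n - 1 - l.val, by omega⟩ / u (Fin.last n) := by
          simp only [Cl, Matrix.of_apply]
          rw [if_pos hj0, revVec_zero, revVec_mk]
          rw [show (⟨n - (l.val + 1), by omega⟩ : Fin (n + 1))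
              = ⟨n - 1 - l.val, by omega⟩ from Fin.ext (show n - (l.val + 1) = n - 1 - l.val by omega)]
        rw [e2, hankel_eq hH i l l ⟨i.val, i.isLt⟩ (show i.val + l.val = l.val + i.val by omega)]
        ring
      rw [hR, ker1 hn hH hker i.val (by omega) i.isLt]
      rw [hankel_eq hH ⟨i.val - 1, by omega⟩ j ⟨i.val - 1, by omega⟩ ⟨0, by omega⟩
        (show i.val - 1 + j.val = i.val - 1 + 0 by omega)]
      field_simp
    · have hR : ∑ l, H i l * Cl n (revVec u) l j = H i ⟨j.val - 1, by omega⟩ := by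
        rw [Finset.sum_eq_single (⟨j.val - 1, by omega⟩ : Fin n)]
        · have : Cl n (revVec u) ⟨j.val - 1, by omega⟩ j = 1 := by
            simp only [Cl, Matrix.of_apply]
            rw [if_neg hj0, if_pos (show j.val - 1 + 1 = j.val by omega)]
          rw [this, mul_one]
        · intro b _ hb
          have : Cl n (revVec u) b j = 0 := by
            simp only [Cl, Matrix.of_apply]
            rw [if_neg hj0, if_neg (fun hc => hb (Fin.ext (show b.val = j.val - 1 by omega)))]
          rw [this, mul_zero]
        · intro h; exact absurd (Finset.mem_univ _) h
      rw [hR]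
      exact hankel_eq hH ⟨i.val - 1, by omega⟩ j i ⟨j.val - 1, by omega⟩
        (show i.val - 1 + j.val = i.val + (j.val - 1) by omega)

lemma prod2 {n : ℕ} (hn : 2 ≤ n) {H : Matrix (Fin n) (Fin n) ℝ} (hH : IsHankel H)
    {u : Fin (n + 1) → ℝ} (hu1 : u 0 ≠ 0)
    (hker : (dH H).mulVec (revVec u) = 0) :
    Cb n u * H = H * Cr n (revVec u) := by
  ext i j
  rw [Matrix.mul_apply, Matrix.mul_apply]
  by_cases hi0 : i.val = n - 1
  · by_cases hj0 : j.val = n - 1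
    · apply Finset.sum_congr rfl
      intro l _
      have e1 : Cb n u i l = -u ⟨n - l.val, by omega⟩ / u 0 := by
        simp only [Cb, Matrix.of_apply]
        rw [if_pos hi0]
      have e2 : Cr n (revVec u) l j = -u ⟨n - l.val, by omega⟩ / u 0 := by
        simp only [Cr, Matrix.of_apply]
        rw [if_pos hj0, revVec_last, revVec_mk]
      rw [e1, e2, hankel_eq hH l j i l (show l.val + j.val = i.val + l.val by omega)]
      ring
    · have hj' : j.val + 1 < n := by have := j.isLt; omega
      have hL : ∑ l, Cb n u i l * H l j
          = -(1 / u 0) * ∑ l : Fin n, u ⟨n - l.val, by omega⟩ * H l ⟨j.val, by omega⟩ := by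
        rw [Finset.mul_sum]
        apply Finset.sum_congr rfl
        intro l _
        have e1 : Cb n u i l = -u ⟨n - l.val, by omega⟩ / u 0 := by
          simp only [Cb, Matrix.of_apply]
          rw [if_pos hi0]
        rw [e1, show (⟨j.val, by omega⟩ : Fin n) = j from Fin.ext rfl]
        ring
      rw [hL, ker2 hn hH hker j.val hj']
      have hR : ∑ l, H i l * Cr n (revVec u) l j = H i ⟨j.val + 1, hj'⟩ := by
        rw [Finset.sum_eq_single (⟨j.val + 1, hj'⟩ : Fin n)]
        · have : Cr n (revVec u) ⟨j.val + 1, hj'⟩ j = 1 := by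
            simp only [Cr, Matrix.of_apply]
            rw [if_neg hj0]; simp
          rw [this, mul_one]
        · intro b _ hb
          have : Cr n (revVec u) b j = 0 := by
            simp only [Cr, Matrix.of_apply]
            rw [if_neg hj0, if_neg (fun hc => hb (Fin.ext (show b.val = j.val + 1 from hc)))]
          rw [this, mul_zero]
        · intro h; exact absurd (Finset.mem_univ _) h
      rw [hR]
      rw [hankel_eq hH ⟨j.val + 1, hj'⟩ ⟨n - 1, by omega⟩ i ⟨j.val + 1, hj'⟩
        (show j.val + 1 + (n - 1) = i.val + (j.val + 1) by omega)]
      field_simp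
  · have hi' : i.val + 1 < n := by have := i.isLt; omega
    have hL : ∑ l, Cb n u i l * H l j = H ⟨i.val + 1, hi'⟩ j := by
      rw [Finset.sum_eq_single (⟨i.val + 1, hi'⟩ : Fin n)]
      · have : Cb n u i ⟨i.val + 1, hi'⟩ = 1 := by
          simp only [Cb, Matrix.of_apply]
          rw [if_neg hi0]; simp
        rw [this, one_mul]
      · intro b _ hb
        have : Cb n u i b = 0 := by
          simp only [Cb, Matrix.of_apply]
          rw [if_neg hi0, if_neg (fun hc => hb (Fin.ext (show b.val = i.val + 1 from hc)))]
        rw [this, zero_mul]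
      · intro h; exact absurd (Finset.mem_univ _) h
    rw [hL]
    by_cases hj0 : j.val = n - 1
    · have hR : ∑ l, H i l * Cr n (revVec u) l j
          = -(1 / u 0) * ∑ l : Fin n, u ⟨n - l.val, by omega⟩ * H l ⟨i.val, by omega⟩ := by
        rw [Finset.mul_sum]
        apply Finset.sum_congr rfl
        intro l _
        have e2 : Cr n (revVec u) l j = -u ⟨n - l.val, by omega⟩ / u 0 := by
          simp only [Cr, Matrix.of_apply]
          rw [if_pos hj0, revVec_last, revVec_mk]
        rw [e2, hankel_eq hH i l l ⟨i.val, by omega⟩ (show i.val + l.val = l.val + i.val by omega)]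
        ring
      rw [hR, ker2 hn hH hker i.val hi']
      rw [hankel_eq hH ⟨i.val + 1, hi'⟩ j ⟨i.val + 1, hi'⟩ ⟨n - 1, by omega⟩
        (show i.val + 1 + j.val = i.val + 1 + (n - 1) by omega)]
      field_simp
    · have hj' : j.val + 1 < n := by have := j.isLt; omega
      have hR : ∑ l, H i l * Cr n (revVec u) l j = H i ⟨j.val + 1, hj'⟩ := by
        rw [Finset.sum_eq_single (⟨j.val + 1, hj'⟩ : Fin n)]
        · have : Cr n (revVec u) ⟨j.val + 1, hj'⟩ j = 1 := by
            simp only [Cr, Matrix.of_apply]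
            rw [if_neg hj0]; simp
          rw [this, mul_one]
        · intro b _ hb
          have : Cr n (revVec u) b j = 0 := by
            simp only [Cr, Matrix.of_apply]
            rw [if_neg hj0, if_neg (fun hc => hb (Fin.ext (show b.val = j.val + 1 from hc)))]
          rw [this, mul_zero]
        · intro h; exact absurd (Finset.mem_univ _) h
      rw [hR]
      exact hH i j hi' hj'

lemma conj_zpow' {n : ℕ} (H A B : Matrix (Fin n) (Fin n) ℝ) (hH : IsUnit H.det)
    (hcomm : A * H = H * B) (k : ℤ) : H⁻¹ * A ^ k * H = B ^ k := by
  have hnat : ∀ m : ℕ, A ^ m * H = H * B ^ m := by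
    intro m
    induction m with
    | zero => simp
    | succ m ih =>
      rw [pow_succ, pow_succ, Matrix.mul_assoc, hcomm, ← Matrix.mul_assoc, ih, Matrix.mul_assoc]
  have hnat' : ∀ m : ℕ, H⁻¹ * A ^ m * H = B ^ m := by
    intro m
    rw [Matrix.mul_assoc, hnat, ← Matrix.mul_assoc, Matrix.nonsing_inv_mul _ hH, Matrix.one_mul]
  cases k with
  | ofNat m => simpa using hnat' m
  | negSucc m =>
    rw [zpow_negSucc, zpow_negSucc, ← hnat' (m + 1), Matrix.mul_inv_rev, Matrix.mul_inv_rev,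
      Matrix.nonsing_inv_nonsing_inv _ hH, Matrix.mul_assoc]

end Aux

/-- If `u^J ∈ ker ∂H` for an invertible Hankel `H`, then for every integer `k`,
`H⁻¹ C_t(u)^k H = C_l(u^J)^k` and `H⁻¹ C_b(u)^k H = C_r(u^J)^k`. -/
theorem hankel_similarity_all_powers
    (n : ℕ) (hn : 2 ≤ n) (H : Matrix (Fin n) (Fin n) ℝ)
    (hHinv : IsUnit H.det) (hH : IsHankel H)
    (u : Fin (n + 1) → ℝ) (hu1 : u 0 ≠ 0) (hun : u (Fin.last n) ≠ 0)
    (hker : (dH H).mulVec (revVec u) = 0) :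
    ∀ k : ℤ, H⁻¹ * Ct n u ^ k * H = Cl n (revVec u) ^ k ∧
      H⁻¹ * Cb n u ^ k * H = Cr n (revVec u) ^ k := by
  intro k
  exact ⟨conj_zpow' H _ _ hHinv (prod1 hn hH hun hker) k,
    conj_zpow' H _ _ hHinv (prod2 hn hH hu1 hker) k⟩
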